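/- Let θ > 0 be a real number. There exist a real ν₀ > 0 and an integer p₀, both depending only on θ, with the following property. For every prime p ≥ p₀ and every subgroup H of 𝔽_p^×, there exist a real ν with ν₀ ≤ ν < θ/2 and an integer k ≥ 1 such that, setting f(a) = (1/|H|)·∑_{s∈H} e(as/p), Λ_ν = {a ∈ 𝔽_p : |f(a)| > p^{−ν}}, M = ∑_{a∈𝔽_p} |f(a)|^{4k}, and ρ_k(x) = |H|^{−2k}·#{(s₁,…,s_{2k}) ∈ H^{2k} : s₁ − s₂ + ⋯ + s_{2k−1} − s_{2k} = x} for x ∈ 𝔽_p, the following two estimates hold: (i) p^{−1−θ}·|Λ_ν| ≤ M/p ≤ p^{−1+θ}·|Λ_ν|; (ii) (1/M)·∑_{x∈𝔽_p} ∑_{a∈𝔽_p} ρ_k(x)·|f(a)|^{4k}·|f(ax)|^{4k} ≥ p^{−10θ}. -/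

import Mathlib

/-- `eChar p x` is `e(x/p) = exp(2πi x̃/p)` where `x̃` is the integer representative of `x`. -/
noncomputable def eChar (p : ℕ) (x : ZMod p) : ℂ :=
  Complex.exp (2 * Real.pi * Complex.I * (x.val : ℂ) / p)


open Finset

lemma eChar_eq_stdAddChar (p : ℕ) [NeZero p] (x : ZMod p) :
    eChar p x = ZMod.stdAddChar x := by
  rw [ZMod.stdAddChar_apply, ZMod.toCircle_apply, eChar]

lemma abs_eChar (p : ℕ) [NeZero p] (x : ZMod p) : ‖eChar p x‖ = 1 := by
  rw [eChar_eq_stdAddChar, ZMod.stdAddChar_apply]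
  exact Circle.norm_coe _

lemma eChar_zero (p : ℕ) [NeZero p] : eChar p 0 = 1 := by
  simp [eChar, ZMod.val_zero]

lemma eChar_add (p : ℕ) [NeZero p] (x y : ZMod p) :
    eChar p (x + y) = eChar p x * eChar p y := by
  simp only [eChar_eq_stdAddChar]; exact AddChar.map_add_eq_mul _ _ _

lemma eChar_neg (p : ℕ) [NeZero p] (x : ZMod p) :
    eChar p (-x) = starRingEnd ℂ (eChar p x) := by
  simp only [eChar_eq_stdAddChar]
  rw [AddChar.map_neg_eq_inv, Complex.inv_def, Complex.normSq_eq_norm_sq]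
  rw [show ‖ZMod.stdAddChar x‖ = 1 from Circle.norm_coe _]
  simp

lemma eChar_sum (p : ℕ) [NeZero p] {ι : Type*} (s : Finset ι) (g : ι → ZMod p) :
    eChar p (∑ i ∈ s, g i) = ∏ i ∈ s, eChar p (g i) := by
  induction s using Finset.cons_induction with
  | empty => simpa using eChar_zero p
  | cons a s ha ih => rw [Finset.sum_cons, Finset.prod_cons, eChar_add, ih]

lemma card_even_range (k : ℕ) : ((Finset.range (2*k)).filter (fun n => Even n)).card = k := by
  induction k with
  | zero => simp
  | succ k ih =>
    have h2 : 2*(k+1) = (2*k)+1+1 := by ring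
    rw [h2, Finset.range_add_one, Finset.range_add_one, Finset.filter_insert, Finset.filter_insert]
    have h1 : ¬ Even (2*k+1) := by simp [Nat.even_add_one]
    rw [if_neg h1, if_pos (even_two_mul k), Finset.card_insert_of_notMem (by simp), ih]

lemma card_filter_fin (m : ℕ) (P : ℕ → Prop) [DecidablePred P] :
    ((univ : Finset (Fin m)).filter (fun i : Fin m => P i.val)).card
      = ((Finset.range m).filter P).card := by
  apply Finset.card_nbij (fun i : Fin m => i.val)
  · intro a ha
    simp only [Finset.mem_coe, Finset.mem_filter, Finset.mem_univ, true_and] at ha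
    simp [Finset.mem_filter, Finset.mem_range, a.isLt, ha]
  · intro a _ b _ h
    exact Fin.ext h
  · intro n hn
    simp only [Finset.coe_filter, Finset.mem_range, Set.mem_setOf_eq] at hn ⊢
    exact ⟨⟨n, hn.1⟩, by simp [hn.2]⟩

lemma card_even_fin (k : ℕ) :
    ((univ : Finset (Fin (2*k))).filter (fun i : Fin (2*k) => Even i.val)).card = k := by
  rw [card_filter_fin]; exact card_even_range k

lemma card_odd_fin (k : ℕ) :
    ((univ : Finset (Fin (2*k))).filter (fun i : Fin (2*k) => ¬ Even i.val)).card = k := by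
  have h2 := card_filter_fin (2*k) (fun n => ¬ Even n)
  rw [h2]
  have h : ((Finset.range (2*k)).filter (fun n => Even n)).card
      + ((Finset.range (2*k)).filter (fun n => ¬ Even n)).card = 2*k := by
    rw [Finset.card_filter_add_card_filter_not, Finset.card_range]
  rw [card_even_range] at h
  omega

lemma step_A {α β R : Type*} [Fintype α] [Fintype β] [Semiring R] (A : α → β) (g : β → R) :
    ∑ x : β, (Nat.card {s : α // A s = x} : R) * g x = ∑ s : α, g (A s) := by
  classical
  have h1 : ∀ x : β, (Nat.card {s : α // A s = x} : R)
      = (((univ : Finset α).filter (fun s => A s = x)).card : R) := by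
    intro x; rw [Nat.card_eq_fintype_card, Fintype.card_subtype]
  calc ∑ x : β, (Nat.card {s : α // A s = x} : R) * g x
      = ∑ x : β, ∑ _s ∈ (univ : Finset α).filter (fun s => A s = x), g x := by
        refine Finset.sum_congr rfl (fun x _ => ?_)
        rw [h1, Finset.sum_const, nsmul_eq_mul]
    _ = ∑ s : α, g (A s) := Finset.sum_fiberwise' univ A g

open scoped Classical in
noncomputable def f0 {p : ℕ} [NeZero p] (H : Subgroup (ZMod p)ˣ) (a : ZMod p) : ℂ :=
  (1 / (Nat.card H : ℂ)) * ∑ s : H, eChar p (a * ((s : (ZMod p)ˣ) : ZMod p))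

open scoped Classical

section f0lemmas

variable {p : ℕ} [NeZero p] (H : Subgroup (ZMod p)ˣ)

lemma cardH_ne (H : Subgroup (ZMod p)ˣ) : (Nat.card H : ℂ) ≠ 0 :=
  Nat.cast_ne_zero.mpr (Nat.card_pos).ne'

lemma sum_abs_eChar (a : ZMod p) :
    ∑ s : H, ‖eChar p (a * ((s : (ZMod p)ˣ) : ZMod p))‖ = (Nat.card H : ℝ) := by
  simp only [abs_eChar]
  rw [Finset.sum_const, Finset.card_univ, ← Nat.card_eq_fintype_card, nsmul_eq_mul, mul_one]

lemma sum_eChar_eq (a : ZMod p) :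
    ∑ s : H, eChar p (a * ((s : (ZMod p)ˣ) : ZMod p)) = (Nat.card H : ℂ) * f0 H a := by
  rw [f0, ← mul_assoc, mul_one_div, div_self (cardH_ne H), one_mul]

lemma f0_zero : f0 H 0 = 1 := by
  have : (Nat.card H : ℂ) ≠ 0 := cardH_ne H
  simp only [f0, zero_mul, eChar_zero, Finset.sum_const, nsmul_eq_mul, mul_one,
    Finset.card_univ, ← Nat.card_eq_fintype_card]
  rw [one_div, inv_mul_cancel₀ this]

lemma abs_f0_le_one (a : ZMod p) : ‖f0 H a‖ ≤ 1 := by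
  have h0 : (0:ℝ) < (Nat.card H : ℝ) := Nat.cast_pos.mpr Nat.card_pos
  rw [f0, norm_mul]
  have h1 : ‖1 / (Nat.card H : ℂ)‖ = 1 / (Nat.card H : ℝ) := by
    simp [map_div₀]
  have h2 : ‖∑ s : H, eChar p (a * ((s : (ZMod p)ˣ) : ZMod p))‖ ≤ (Nat.card H : ℝ) :=
    (norm_sum_le _ _).trans (sum_abs_eChar H a).le
  rw [h1]
  calc 1 / (Nat.card H : ℝ) * ‖∑ s : H, eChar p (a * ((s : (ZMod p)ˣ) : ZMod p))‖
      ≤ 1 / (Nat.card H : ℝ) * (Nat.card H : ℝ) :=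
        mul_le_mul_of_nonneg_left h2 (by positivity)
    _ = 1 := by field_simp

lemma f0_mul_mem {t : (ZMod p)ˣ} (ht : t ∈ H) (a : ZMod p) :
    f0 H (a * (t : ZMod p)) = f0 H a := by
  unfold f0
  congr 1
  apply Finset.sum_nbij' (fun s => (⟨t, ht⟩ : H) * s) (fun s => (⟨t, ht⟩ : H)⁻¹ * s)
  · intros; simp
  · intros; simp
  · intros; simp [mul_assoc]
  · intros; simp
  · intro s _
    congr 1
    push_cast
    ring

lemma sum_prod_walks (k : ℕ) (b : ZMod p) :
    ∑ s : Fin (2*k) → H,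
        eChar p (b * ∑ i : Fin (2*k), (-1 : ZMod p) ^ (i : ℕ) * ((s i : (ZMod p)ˣ) : ZMod p))
      = ((Nat.card H : ℂ) * f0 H b) ^ k * ((Nat.card H : ℂ) * starRingEnd ℂ (f0 H b)) ^ k := by
  have hsplit : ∀ s : Fin (2*k) → H,
      eChar p (b * ∑ i : Fin (2*k), (-1 : ZMod p) ^ (i : ℕ) * ((s i : (ZMod p)ˣ) : ZMod p))
        = ∏ i : Fin (2*k), eChar p (b * ((-1 : ZMod p) ^ (i : ℕ) * ((s i : (ZMod p)ˣ) : ZMod p))) := by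
    intro s
    rw [Finset.mul_sum, eChar_sum]
  simp only [hsplit]
  rw [← Fintype.piFinset_univ]
  rw [Finset.sum_prod_piFinset (univ : Finset H)
    (fun (i : Fin (2*k)) (u : H) => eChar p (b * ((-1 : ZMod p) ^ (i : ℕ) * ((u : (ZMod p)ˣ) : ZMod p))))]
  have factor : ∀ i : Fin (2*k),
      (∑ u : H, eChar p (b * ((-1 : ZMod p) ^ (i : ℕ) * ((u : (ZMod p)ˣ) : ZMod p))))
        = if Even (i : ℕ) then (Nat.card H : ℂ) * f0 H b
          else (Nat.card H : ℂ) * starRingEnd ℂ (f0 H b) := by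
    intro i
    by_cases hi : Even (i : ℕ)
    · rw [if_pos hi, ← sum_eChar_eq H b]
      refine Finset.sum_congr rfl (fun u _ => ?_)
      rw [hi.neg_one_pow, one_mul]
    · rw [if_neg hi]
      have hodd : (-1 : ZMod p) ^ (i : ℕ) = -1 := (Nat.not_even_iff_odd.mp hi).neg_one_pow
      have : ∀ u : H, eChar p (b * ((-1 : ZMod p) ^ (i : ℕ) * ((u : (ZMod p)ˣ) : ZMod p)))
          = starRingEnd ℂ (eChar p (b * ((u : (ZMod p)ˣ) : ZMod p))) := by
        intro u
        rw [hodd, show b * (-1 * ((u : (ZMod p)ˣ) : ZMod p)) = -(b * ((u : (ZMod p)ˣ) : ZMod p)) by ring,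
          eChar_neg]
      simp only [this]
      rw [← map_sum, sum_eChar_eq H b, map_mul]
      congr 1
      simp
  rw [Finset.prod_congr rfl (fun i _ => factor i)]
  rw [Finset.prod_ite, Finset.prod_const, Finset.prod_const, card_even_fin, card_odd_fin]

lemma key_id (k : ℕ) (a : ZMod p) :
    ∑ x : ZMod p,
        (Nat.card {s : Fin (2*k) → H //
            ∑ i : Fin (2*k), (-1 : ZMod p) ^ (i : ℕ) * ((s i : (ZMod p)ˣ) : ZMod p) = x} : ℂ)
          * f0 H (a * x)
      = (Nat.card H : ℂ) ^ (2*k) * ((‖f0 H a‖) ^ (2*k) : ℝ) := by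
  rw [step_A]
  have expand : ∀ s : Fin (2*k) → H,
      f0 H (a * ∑ i : Fin (2*k), (-1 : ZMod p) ^ (i : ℕ) * ((s i : (ZMod p)ˣ) : ZMod p))
        = (1 / (Nat.card H : ℂ)) * ∑ t : H,
            eChar p ((a * ((t : (ZMod p)ˣ) : ZMod p))
              * ∑ i : Fin (2*k), (-1 : ZMod p) ^ (i : ℕ) * ((s i : (ZMod p)ˣ) : ZMod p)) := by
    intro s
    rw [f0]
    congr 1
    refine Finset.sum_congr rfl (fun t _ => ?_)
    congr 1
    ring
  calc ∑ s : Fin (2*k) → H,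
        f0 H (a * ∑ i : Fin (2*k), (-1 : ZMod p) ^ (i : ℕ) * ((s i : (ZMod p)ˣ) : ZMod p))
      = (1 / (Nat.card H : ℂ)) * ∑ t : H, ∑ s : Fin (2*k) → H,
          eChar p ((a * ((t : (ZMod p)ˣ) : ZMod p))
            * ∑ i : Fin (2*k), (-1 : ZMod p) ^ (i : ℕ) * ((s i : (ZMod p)ˣ) : ZMod p)) := by
        rw [Finset.sum_congr rfl (fun s _ => expand s), ← Finset.mul_sum, Finset.sum_comm]
    _ = (1 / (Nat.card H : ℂ)) * ∑ t : H,
          ((Nat.card H : ℂ) * f0 H a) ^ k * ((Nat.card H : ℂ) * starRingEnd ℂ (f0 H a)) ^ k := by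
        congr 1
        refine Finset.sum_congr rfl (fun t _ => ?_)
        rw [sum_prod_walks, f0_mul_mem H t.2]
    _ = (Nat.card H : ℂ) ^ (2*k) * ((‖f0 H a‖) ^ (2*k) : ℝ) := by
        rw [Finset.sum_const, Finset.card_univ, ← Nat.card_eq_fintype_card, nsmul_eq_mul]
        have hc := cardH_ne H
        have habs : ((‖f0 H a‖ ^ (2*k) : ℝ) : ℂ)
            = (f0 H a * starRingEnd ℂ (f0 H a)) ^ k := by
          rw [Complex.mul_conj, Complex.normSq_eq_norm_sq]
          push_cast
          rw [← pow_mul]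
        rw [habs]
        field_simp
        ring

lemma mass (k : ℕ) :
    ∑ x : ZMod p,
        (Nat.card {s : Fin (2*k) → H //
            ∑ i : Fin (2*k), (-1 : ZMod p) ^ (i : ℕ) * ((s i : (ZMod p)ˣ) : ZMod p) = x} : ℝ)
      = (Nat.card H : ℝ) ^ (2*k) := by
  have h := step_A (R := ℝ)
    (fun s : Fin (2*k) → H => ∑ i : Fin (2*k), (-1 : ZMod p) ^ (i : ℕ) * ((s i : (ZMod p)ˣ) : ZMod p))
    (fun _ => (1:ℝ))
  simp only [mul_one] at h
  rw [h, Finset.sum_const, Finset.card_univ, nsmul_eq_mul, mul_one]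
  rw [show (Fintype.card (Fin (2*k) → H) : ℝ) = ((Nat.card (Fin (2*k) → H) : ℕ) : ℝ) by
    rw [Nat.card_eq_fintype_card]]
  rw [Nat.card_fun, Nat.card_eq_fintype_card (α := Fin (2*k)), Fintype.card_fin]
  push_cast
  ring

end f0lemmas


noncomputable def dseq (θ : ℝ) : ℕ → ℝ
  | 0 => θ/4
  | (i+1) => 4*θ*(dseq θ i)^2

noncomputable def nuseq (θ ν0 : ℝ) : ℕ → ℝ
  | 0 => ν0
  | (j+1) => Real.sqrt (nuseq θ ν0 j / (4*θ))

variable {θ : ℝ}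

lemma dseq_pos (hθ : 0 < θ) : ∀ i, 0 < dseq θ i
  | 0 => by simp [dseq]; positivity
  | (i+1) => by
      have := dseq_pos hθ i
      simp only [dseq]; positivity

lemma dseq_le (hθ : 0 < θ) (hθ1 : θ ≤ 1) : ∀ i, dseq θ i ≤ θ/4
  | 0 => le_refl _
  | (i+1) => by
      have h1 := dseq_pos hθ i
      have h2 := dseq_le hθ hθ1 i
      show 4*θ*(dseq θ i)^2 ≤ θ/4
      nlinarith [sq_nonneg (dseq θ i), sq_nonneg (θ/4 - dseq θ i), sq_nonneg θ]

section nu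
variable (hθ : 0 < θ) {ν0 : ℝ} (hν0 : 0 < ν0)
include hθ hν0

lemma nuseq_pos : ∀ j, 0 < nuseq θ ν0 j
  | 0 => hν0
  | (j+1) => by
      have := nuseq_pos (j := j)
      simp only [nuseq]
      positivity

lemma nuseq_rel (j : ℕ) : nuseq θ ν0 j = 4*θ*(nuseq θ ν0 (j+1))^2 := by
  have h1 := nuseq_pos hθ hν0 j
  show nuseq θ ν0 j = 4*θ*(Real.sqrt (nuseq θ ν0 j / (4*θ)))^2
  rw [Real.sq_sqrt (by positivity)]
  field_simp

end nu

lemma nuseq_le_dseq (hθ : 0 < θ) (J : ℕ) :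
    ∀ j, j ≤ J → nuseq θ (dseq θ J) j ≤ dseq θ (J - j)
  | 0, _ => by simp [nuseq]
  | (j+1), hj => by
      have hd := dseq_pos hθ
      have ih := nuseq_le_dseq hθ J j (by omega)
      have hJj : J - j = (J - (j+1)) + 1 := by omega
      show Real.sqrt (nuseq θ (dseq θ J) j / (4*θ)) ≤ dseq θ (J - (j+1))
      have h2 : nuseq θ (dseq θ J) j / (4*θ) ≤ (dseq θ (J - (j+1)))^2 := by
        rw [hJj] at ih
        have : dseq θ ((J - (j+1)) + 1) = 4*θ*(dseq θ (J - (j+1)))^2 := rfl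
        rw [this] at ih
        rw [div_le_iff₀ (by positivity)]
        linarith [ih]
      calc Real.sqrt (nuseq θ (dseq θ J) j / (4*θ)) ≤ Real.sqrt ((dseq θ (J - (j+1)))^2) :=
            Real.sqrt_le_sqrt h2
        _ = dseq θ (J - (j+1)) := Real.sqrt_sq (hd _).le

lemma nuseq_le (hθ : 0 < θ) (hθ1 : θ ≤ 1) (J : ℕ) {j : ℕ} (hj : j ≤ J) :
    nuseq θ (dseq θ J) j ≤ θ/4 :=
  (nuseq_le_dseq hθ J j hj).trans (dseq_le hθ hθ1 _)

lemma nuseq_mono (hθ : 0 < θ) (hθ1 : θ ≤ 1) (J : ℕ) {j : ℕ} (hj : j + 1 ≤ J) :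
    nuseq θ (dseq θ J) j ≤ nuseq θ (dseq θ J) (j+1) := by
  have hν0 : 0 < dseq θ J := dseq_pos hθ J
  have h1 : 0 < nuseq θ (dseq θ J) (j+1) := nuseq_pos hθ hν0 _
  have h2 : nuseq θ (dseq θ J) (j+1) ≤ θ/4 := nuseq_le hθ hθ1 J hj
  have h3 := nuseq_rel hθ hν0 j
  nlinarith

lemma nuseq_ge (hθ : 0 < θ) (hθ1 : θ ≤ 1) (J : ℕ) :
    ∀ j, j ≤ J → dseq θ J ≤ nuseq θ (dseq θ J) j
  | 0, _ => le_refl _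
  | (j+1), hj => (nuseq_ge hθ hθ1 J j (by omega)).trans (nuseq_mono hθ hθ1 J hj)

set_option maxHeartbeats 2000000 in
open Finset in
open scoped Classical in
theorem main_small (θ : ℝ) (hθ : 0 < θ) (hθ1 : θ ≤ 1/100) :
    ∃ ν₀ : ℝ, 0 < ν₀ ∧ ∃ p₀ : ℕ,
      ∀ (p : ℕ) [Fact p.Prime], p₀ ≤ p →
        ∀ H : Subgroup (ZMod p)ˣ,
          ∃ ν : ℝ, ν₀ ≤ ν ∧ ν < θ / 2 ∧ ∃ k : ℕ, 1 ≤ k ∧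
            ∀ f : ZMod p → ℂ,
              (∀ a : ZMod p, f a = (1 / (Nat.card H : ℂ)) *
                  ∑ s : H, eChar p (a * ((s : (ZMod p)ˣ) : ZMod p))) →
              ∀ Λ : Set (ZMod p),
                Λ = {a : ZMod p | (p : ℝ) ^ (-ν) < ‖f a‖} →
              ∀ M : ℝ, M = ∑ a, ‖f a‖ ^ (4 * k) →
              ∀ ρk : ZMod p → ℝ,
                (∀ x : ZMod p, ρk x =
                  (Nat.card {s : Fin (2 * k) → H //
                      ∑ i : Fin (2 * k), (-1 : ZMod p) ^ (i : ℕ) * ((s i : (ZMod p)ˣ) : ZMod p) = x} : ℝ) /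
                    (Nat.card H : ℝ) ^ (2 * k)) →
                ((p : ℝ) ^ (-1 - θ) * Λ.ncard ≤ M / p ∧
                  M / p ≤ (p : ℝ) ^ (-1 + θ) * Λ.ncard) ∧
                (p : ℝ) ^ (-10 * θ) ≤
                  (1 / M) * ∑ x, ∑ a, ρk x *
                    ‖f a‖ ^ (4 * k) * ‖f (a * x)‖ ^ (4 * k) := by
  have hθ4 : θ ≤ 1 := by linarith
  set J := ⌈2/θ⌉₊ + 1 with hJdef
  refine ⟨dseq θ J, dseq_pos hθ J, max 3 (⌈(2:ℝ)^((2:ℝ)/θ)⌉₊ + 1), ?_⟩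
  intro p hfact hpge H
  haveI : NeZero p := ⟨hfact.out.ne_zero⟩
  -- basic facts about p
  have hp3 : 3 ≤ p := le_trans (le_max_left _ _) hpge
  have hp1 : (1:ℝ) < (p:ℝ) := by
    have : (3:ℝ) ≤ (p:ℝ) := by exact_mod_cast hp3
    linarith
  have hp0 : (0:ℝ) < (p:ℝ) := by linarith
  have hrpadd : ∀ y z : ℝ, (p:ℝ)^y * (p:ℝ)^z = (p:ℝ)^(y+z) :=
    fun y z => (Real.rpow_add hp0 y z).symm
  have hrple : ∀ {y z : ℝ}, y ≤ z → (p:ℝ)^y ≤ (p:ℝ)^z :=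
    fun h => Real.rpow_le_rpow_of_exponent_le hp1.le h
  have hrpos : ∀ y : ℝ, 0 < (p:ℝ)^y := fun y => Real.rpow_pos_of_pos hp0 y
  have hp2 : (2:ℝ) ≤ (p:ℝ)^(θ/2) := by
    have h1 : ((2:ℝ)^((2:ℝ)/θ)) ≤ (p:ℝ) := by
      have h2 : (⌈(2:ℝ)^((2:ℝ)/θ)⌉₊ + 1 : ℕ) ≤ p := le_trans (le_max_right _ _) hpge
      have h3 : ((2:ℝ)^((2:ℝ)/θ)) ≤ (⌈(2:ℝ)^((2:ℝ)/θ)⌉₊ : ℝ) := Nat.le_ceil _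
      have h4 : ((⌈(2:ℝ)^((2:ℝ)/θ)⌉₊ : ℕ) : ℝ) + 1 ≤ (p:ℝ) := by exact_mod_cast h2
      linarith
    have h5 : ((2:ℝ)^((2:ℝ)/θ))^(θ/2) ≤ (p:ℝ)^(θ/2) :=
      Real.rpow_le_rpow (by positivity) h1 (by positivity)
    have h6 : ((2:ℝ)^((2:ℝ)/θ))^(θ/2) = (2:ℝ) := by
      rw [← Real.rpow_mul (by norm_num : (0:ℝ) ≤ 2)]
      rw [show (2:ℝ)/θ * (θ/2) = 1 by field_simp]
      exact Real.rpow_one 2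
    linarith
  -- the nu sequence
  set ν0 := dseq θ J with hν0def
  have hν0pos : 0 < ν0 := dseq_pos hθ J
  set w : ℕ → ℝ := nuseq θ ν0 with hwdef
  have hwpos : ∀ i, 0 < w i := fun i => nuseq_pos hθ hν0pos i
  -- the level sets
  set F : ZMod p → ℝ := fun a => ‖f0 H a‖ with hF
  have hFnonneg : ∀ a, 0 ≤ F a := fun a => norm_nonneg _
  have hFle1 : ∀ a, F a ≤ 1 := fun a => abs_f0_le_one H a
  have hF0 : F 0 = 1 := by rw [hF]; simp only [f0_zero, norm_one]
  set Lam : ℝ → Finset (ZMod p) := fun ν => univ.filter (fun a => (p:ℝ)^(-ν) < F a) with hLam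
  have hzero_mem : ∀ ν : ℝ, 0 < ν → (0:ZMod p) ∈ Lam ν := by
    intro ν hν
    simp only [hLam, Finset.mem_filter, Finset.mem_univ, true_and, hF0]
    exact Real.rpow_lt_one_of_one_lt_of_neg hp1 (by linarith)
  have hone_le_card : ∀ ν : ℝ, 0 < ν → (1:ℝ) ≤ ((Lam ν).card : ℝ) := by
    intro ν hν
    have := Finset.card_pos.mpr ⟨0, hzero_mem ν hν⟩
    exact_mod_cast this
  have hcard_le : ∀ ν : ℝ, ((Lam ν).card : ℝ) ≤ (p:ℝ) := by
    intro ν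
    have h1 : (Lam ν).card ≤ Fintype.card (ZMod p) := Finset.card_le_univ _
    rw [ZMod.card] at h1
    exact_mod_cast h1
  -- pigeonhole
  have hpigeon : ∃ j, j < J ∧
      ((Lam (w (j+1))).card : ℝ) ≤ (p:ℝ)^(θ/2) * ((Lam (w j)).card : ℝ) := by
    by_contra hcon
    push_neg at hcon
    have hclaim : ∀ j, j ≤ J → ((p:ℝ)^(θ/2))^j ≤ ((Lam (w j)).card : ℝ) := by
      intro j
      induction j with
      | zero =>
        intro _
        simpa using hone_le_card (w 0) (hwpos 0)
      | succ j ih =>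
        intro hj
        have h1 := ih (by omega)
        have h2 := hcon j (by omega)
        calc ((p:ℝ)^(θ/2))^(j+1) = (p:ℝ)^(θ/2) * ((p:ℝ)^(θ/2))^j := by ring
          _ ≤ (p:ℝ)^(θ/2) * ((Lam (w j)).card : ℝ) :=
              mul_le_mul_of_nonneg_left h1 (hrpos _).le
          _ ≤ _ := h2.le
    have hfin : ((p:ℝ)^(θ/2))^J ≤ (p:ℝ) := le_trans (hclaim J le_rfl) (hcard_le (w J))
    rw [← Real.rpow_natCast ((p:ℝ)^(θ/2)) J, ← Real.rpow_mul hp0.le] at hfin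
    have hJ1 : (1:ℝ) < θ/2 * J := by
      have h7 : (2:ℝ)/θ ≤ (⌈2/θ⌉₊ : ℝ) := Nat.le_ceil _
      have h8 : ((J:ℕ) : ℝ) = (⌈2/θ⌉₊ : ℝ) + 1 := by
        rw [hJdef]; push_cast; ring
      rw [h8]
      have h9 : θ/2 * ((2:ℝ)/θ + 1) = 1 + θ/2 := by field_simp
      nlinarith
    have hcontr : (p:ℝ)^(1:ℝ) < (p:ℝ)^(θ/2 * J) :=
      Real.rpow_lt_rpow_left_iff hp1 |>.mpr hJ1
    rw [Real.rpow_one] at hcontr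
    linarith
  obtain ⟨ν', ν, hν'pos, hνpos, hν_le, hν'_rel, hν_ge, hratio⟩ :
      ∃ ν' ν : ℝ, 0 < ν' ∧ 0 < ν ∧ ν ≤ θ/4 ∧ ν' = 4*θ*ν^2 ∧ dseq θ J ≤ ν ∧
        ((Lam ν).card : ℝ) ≤ (p:ℝ)^(θ/2) * ((Lam ν').card : ℝ) := by
    obtain ⟨j, hjJ, hratio⟩ := hpigeon
    exact ⟨w j, w (j+1), hwpos j, hwpos (j+1), nuseq_le hθ hθ4 J hjJ,
      nuseq_rel hθ hν0pos j, nuseq_ge hθ hθ4 J (j+1) hjJ, hratio⟩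
  refine ⟨ν, hν_ge, by linarith, ?_⟩
  -- choice of k
  obtain ⟨k, hk1, hk_low, hk_up⟩ :
      ∃ k : ℕ, 1 ≤ k ∧ 1/(4*ν) ≤ (k:ℝ) ∧ (k:ℝ) ≤ 1/(2*ν) := by
    refine ⟨⌈1/(4*ν)⌉₊, Nat.one_le_ceil_iff.mpr (by positivity), Nat.le_ceil _, ?_⟩
    have hx1 : (1:ℝ) ≤ 1/(4*ν) := by
      rw [le_one_div (by norm_num) (by positivity)]
      linarith
    have h1 : (⌈1/(4*ν)⌉₊:ℝ) < 1/(4*ν) + 1 := Nat.ceil_lt_add_one (by positivity)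
    have h2 : (2:ℝ)*(1/(4*ν)) = 1/(2*ν) := by
      field_simp
      ring
    linarith
  have hkν2 : (k:ℝ)*(2*ν) ≤ 1 := by
    rw [← le_div_iff₀ (by positivity)]
    calc (k:ℝ) ≤ 1/(2*ν) := hk_up
      _ = 1/(2*ν) := rfl
  have h1k : 1 ≤ (k:ℝ)*(4*ν) := by
    have := (div_le_iff₀ (by positivity : (0:ℝ) < 4*ν)).mp hk_low
    linarith
  have h4kν : (1:ℝ) ≤ 4*(k:ℝ)*ν := by linarith
  have hkν : (k:ℝ)*ν ≤ 1/2 := by linarith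
  have h4kν' : 4*(k:ℝ)*ν' ≤ θ/2 := by
    have heq : 4*(k:ℝ)*ν' = 16*θ*ν*((k:ℝ)*ν) := by rw [hν'_rel]; ring
    have h16 : 16*θ*ν*((k:ℝ)*ν) ≤ 16*θ*ν*(1/2) :=
      mul_le_mul_of_nonneg_left hkν (by positivity)
    have hθν : 8*θ*ν ≤ 8*θ*(θ/4) := mul_le_mul_of_nonneg_left hν_le (by positivity)
    nlinarith [hθ]
  have h8k2 : 8*(k:ℝ)^2*ν' ≤ 8*θ := by
    have hkν0 : (0:ℝ) ≤ (k:ℝ)*ν := by positivity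
    have hsq : ((k:ℝ)*ν)^2 ≤ 1/4 := by nlinarith
    have heq : 8*(k:ℝ)^2*ν' = 32*θ*(((k:ℝ)*ν)^2) := by rw [hν'_rel]; ring
    have h32 := mul_le_mul_of_nonneg_left hsq (by positivity : (0:ℝ) ≤ 32*θ)
    linarith
  have h9θ : (4*(k:ℝ) + 8*(k:ℝ)^2)*ν' ≤ 9*θ := by
    have hsplit9 : (4*(k:ℝ) + 8*(k:ℝ)^2)*ν' = 4*(k:ℝ)*ν' + 8*(k:ℝ)^2*ν' := by ring
    linarith
  refine ⟨k, hk1, ?_⟩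
  intro f hf Λ hΛ M hM ρk hρ
  have hff : ∀ a, f a = f0 H a := fun a => by rw [hf a]; rfl
  have hΛcard : (Λ.ncard : ℝ) = ((Lam ν).card : ℝ) := by
    have hset : Λ = ↑(Lam ν) := by
      rw [hΛ]
      ext a
      simp only [hLam, Finset.coe_filter, Finset.mem_univ, true_and, Set.mem_setOf_eq, hff a, hF]
    rw [hset, Set.ncard_coe_finset]
  have hMF : M = ∑ a, F a ^ (4*k) := by
    rw [hM]; exact Finset.sum_congr rfl (fun a _ => by rw [hff a])
  have hrpow_pow : ∀ (y : ℝ) (m : ℕ), ((p:ℝ)^(-y))^m = (p:ℝ)^(-((m:ℝ)*y)) := by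
    intro y m
    rw [← Real.rpow_natCast ((p:ℝ)^(-y)) m, ← Real.rpow_mul hp0.le]
    ring_nf
  -- M bounds
  have hM_ge : ((Lam ν').card : ℝ) * (p:ℝ)^(-((4*k : ℕ) * ν' : ℝ)) ≤ M := by
    rw [hMF]
    calc ((Lam ν').card : ℝ) * (p:ℝ)^(-((4*k : ℕ) * ν' : ℝ))
        = ∑ _a ∈ Lam ν', (p:ℝ)^(-(((4*k : ℕ) : ℝ) * ν')) := by
          rw [Finset.sum_const, nsmul_eq_mul]
      _ ≤ ∑ a ∈ Lam ν', F a^(4*k) := by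
          refine Finset.sum_le_sum (fun a ha => ?_)
          have hmem : (p:ℝ)^(-ν') < F a := by
            simp only [hLam, Finset.mem_filter] at ha
            exact ha.2
          calc (p:ℝ)^(-(((4*k : ℕ) : ℝ)*ν')) = ((p:ℝ)^(-ν'))^(4*k) := (hrpow_pow ν' (4*k)).symm
            _ ≤ F a^(4*k) := pow_le_pow_left₀ (hrpos _).le hmem.le _
      _ ≤ ∑ a, F a^(4*k) := Finset.sum_le_sum_of_subset_of_nonneg (Finset.subset_univ _)
            (fun a _ _ => by positivity)
  have hM_le2 : M ≤ ((Lam ν).card : ℝ) + 1 := by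
    rw [hMF]
    have hsplit := Finset.sum_filter_add_sum_filter_not univ
      (fun a => (p:ℝ)^(-ν) < F a) (fun a => F a^(4*k))
    have hpart1 : ∑ a ∈ Lam ν, F a^(4*k) ≤ ((Lam ν).card : ℝ) := by
      calc ∑ a ∈ Lam ν, F a^(4*k) ≤ ∑ _a ∈ Lam ν, (1:ℝ) :=
            Finset.sum_le_sum (fun a _ => by
              calc F a^(4*k) ≤ 1^(4*k) := pow_le_pow_left₀ (hFnonneg a) (hFle1 a) _
                _ = 1 := one_pow _)
        _ = ((Lam ν).card : ℝ) := by rw [Finset.sum_const, nsmul_eq_mul, mul_one]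
    have hpart2 : ∑ a ∈ univ.filter (fun a => ¬ ((p:ℝ)^(-ν) < F a)), F a^(4*k) ≤ 1 := by
      have hterm : ∀ a ∈ univ.filter (fun a => ¬ ((p:ℝ)^(-ν) < F a)),
          F a^(4*k) ≤ (p:ℝ)^(-(((4*k : ℕ) : ℝ)*ν)) := by
        intro a ha
        simp only [Finset.mem_filter, not_lt] at ha
        calc F a^(4*k) ≤ ((p:ℝ)^(-ν))^(4*k) := pow_le_pow_left₀ (hFnonneg a) ha.2 _
          _ = (p:ℝ)^(-(((4*k : ℕ) : ℝ)*ν)) := hrpow_pow ν (4*k)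
      calc ∑ a ∈ univ.filter (fun a => ¬ ((p:ℝ)^(-ν) < F a)), F a^(4*k)
          ≤ ∑ _a ∈ univ.filter (fun a => ¬ ((p:ℝ)^(-ν) < F a)), (p:ℝ)^(-(((4*k : ℕ) : ℝ)*ν)) :=
            Finset.sum_le_sum hterm
        _ = ((univ.filter (fun a => ¬ ((p:ℝ)^(-ν) < F a))).card : ℝ) * (p:ℝ)^(-(((4*k : ℕ) : ℝ)*ν)) := by
            rw [Finset.sum_const, nsmul_eq_mul]
        _ ≤ (p:ℝ) * (p:ℝ)^(-(((4*k : ℕ) : ℝ)*ν)) := by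
            refine mul_le_mul_of_nonneg_right ?_ (hrpos _).le
            have h1 : (univ.filter (fun a => ¬ ((p:ℝ)^(-ν) < F a))).card ≤ Fintype.card (ZMod p) :=
              Finset.card_le_univ _
            rw [ZMod.card] at h1
            exact_mod_cast h1
        _ = (p:ℝ)^(1 + -(((4*k : ℕ) : ℝ)*ν)) := by
            rw [← hrpadd]; rw [Real.rpow_one]
        _ ≤ (p:ℝ)^(0:ℝ) := by
            apply hrple
            have : (1:ℝ) ≤ ((4*k : ℕ) : ℝ)*ν := by push_cast; linarith
            linarith
        _ = 1 := Real.rpow_zero _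
    calc ∑ a, F a^(4*k)
        = ∑ a ∈ Lam ν, F a^(4*k) + ∑ a ∈ univ.filter (fun a => ¬ ((p:ℝ)^(-ν) < F a)), F a^(4*k) := by
          rw [← hsplit]
      _ ≤ ((Lam ν).card : ℝ) + 1 := add_le_add hpart1 hpart2
  have hN1 : (1:ℝ) ≤ ((Lam ν).card : ℝ) := hone_le_card ν hνpos
  have hM_le3 : M ≤ (p:ℝ)^(θ/2) * ((Lam ν).card : ℝ) := by
    calc M ≤ ((Lam ν).card : ℝ) + 1 := hM_le2
      _ ≤ 2 * ((Lam ν).card : ℝ) := by linarith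
      _ ≤ (p:ℝ)^(θ/2) * ((Lam ν).card : ℝ) := mul_le_mul_of_nonneg_right hp2 (by linarith)
  have hM1 : (1:ℝ) ≤ M := by
    rw [hMF]
    have h0 : F 0^(4*k) = 1 := by rw [hF0, one_pow]
    calc (1:ℝ) = F 0^(4*k) := h0.symm
      _ ≤ ∑ a, F a^(4*k) :=
        Finset.single_le_sum (f := fun a : ZMod p => F a^(4*k)) (fun a _ => by positivity)
          (Finset.mem_univ (0 : ZMod p))
  have hMpos : (0:ℝ) < M := by linarith
  constructor
  · constructor
    · -- lower bound
      rw [hΛcard, le_div_iff₀ hp0]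
      calc (p:ℝ)^(-1-θ) * ((Lam ν).card : ℝ) * (p:ℝ)
          ≤ (p:ℝ)^(-1-θ) * ((p:ℝ)^(θ/2) * ((Lam ν').card : ℝ)) * (p:ℝ) := by
            refine mul_le_mul_of_nonneg_right (mul_le_mul_of_nonneg_left hratio (hrpos _).le) hp0.le
        _ = ((p:ℝ)^(-1-θ) * (p:ℝ)^(θ/2) * (p:ℝ)^(1:ℝ)) * ((Lam ν').card : ℝ) := by
            rw [Real.rpow_one]; ring
        _ = (p:ℝ)^(-θ/2) * ((Lam ν').card : ℝ) := by
            rw [hrpadd, hrpadd, show (-1 - θ + θ/2 + 1 : ℝ) = -θ/2 by ring]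
        _ ≤ (p:ℝ)^(-((4*k : ℕ) * ν' : ℝ)) * ((Lam ν').card : ℝ) := by
            refine mul_le_mul_of_nonneg_right (hrple ?_) (by positivity)
            push_cast
            linarith
        _ = ((Lam ν').card : ℝ) * (p:ℝ)^(-((4*k : ℕ) * ν' : ℝ)) := by ring
        _ ≤ M := hM_ge
    · -- upper bound
      rw [hΛcard, div_le_iff₀ hp0]
      calc M ≤ (p:ℝ)^(θ/2) * ((Lam ν).card : ℝ) := hM_le3
        _ ≤ ((p:ℝ)^(-1+θ) * (p:ℝ)^(1:ℝ)) * ((Lam ν).card : ℝ) := by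
            refine mul_le_mul_of_nonneg_right ?_ (by linarith)
            rw [hrpadd]
            exact hrple (by linarith)
        _ = (p:ℝ)^(-1+θ) * ((Lam ν).card : ℝ) * (p:ℝ) := by rw [Real.rpow_one]; ring
  · -- part (ii)
    have hρ0 : ∀ x, 0 ≤ ρk x := by
      intro x
      rw [hρ x]
      positivity
    have hw1 : ∑ x, ρk x = 1 := by
      have hmass := mass H k
      have hcpos : (0:ℝ) < (Nat.card H : ℝ) := by
        exact_mod_cast Nat.card_pos (α := H)
      have hstep : ∑ x, ρk x = (∑ x : ZMod p,
          (Nat.card {s : Fin (2 * k) → H //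
              ∑ i : Fin (2 * k), (-1 : ZMod p) ^ (i : ℕ) * ((s i : (ZMod p)ˣ) : ZMod p) = x} : ℝ))
            / (Nat.card H : ℝ) ^ (2*k) := by
        rw [Finset.sum_div]
        exact Finset.sum_congr rfl (fun x _ => hρ x)
      rw [hstep, hmass, div_self (by positivity)]
    have hkey : ∀ a : ZMod p, (F a)^(2*k) ≤ ∑ x, ρk x * F (a*x) := by
      intro a
      have hcc : ((Nat.card H : ℂ))^(2*k) ≠ 0 := pow_ne_zero _ (cardH_ne H)
      have h1 : ∑ x, ((ρk x : ℝ) : ℂ) * f0 H (a*x) = (((F a)^(2*k) : ℝ) : ℂ) := by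
        have hkid := key_id H k a
        calc ∑ x, ((ρk x : ℝ) : ℂ) * f0 H (a*x)
            = ∑ x, ((Nat.card {s : Fin (2 * k) → H //
                ∑ i : Fin (2 * k), (-1 : ZMod p) ^ (i : ℕ) * ((s i : (ZMod p)ˣ) : ZMod p) = x} : ℂ)
                  / ((Nat.card H : ℂ))^(2*k)) * f0 H (a*x) := by
              refine Finset.sum_congr rfl (fun x _ => ?_)
              rw [hρ x]
              push_cast
              ring_nf
          _ = (∑ x, (Nat.card {s : Fin (2 * k) → H //
                ∑ i : Fin (2 * k), (-1 : ZMod p) ^ (i : ℕ) * ((s i : (ZMod p)ˣ) : ZMod p) = x} : ℂ)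
                  * f0 H (a*x)) / ((Nat.card H : ℂ))^(2*k) := by
              rw [Finset.sum_div]
              exact Finset.sum_congr rfl (fun x _ => by ring)
          _ = (((F a)^(2*k) : ℝ) : ℂ) := by
              rw [hkid, mul_comm, mul_div_assoc, div_self hcc, mul_one, hF]
      calc (F a)^(2*k) = ‖(((F a)^(2*k) : ℝ) : ℂ)‖ := by
            rw [Complex.norm_real, Real.norm_eq_abs, abs_of_nonneg (by positivity)]
        _ = ‖∑ x, ((ρk x : ℝ) : ℂ) * f0 H (a*x)‖ := by rw [h1]
        _ ≤ ∑ x, ‖((ρk x : ℝ) : ℂ) * f0 H (a*x)‖ := norm_sum_le _ _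
        _ = ∑ x, ρk x * F (a*x) := by
            refine Finset.sum_congr rfl (fun x _ => ?_)
            rw [norm_mul, Complex.norm_real, Real.norm_eq_abs, abs_of_nonneg (hρ0 x), hF]
    have hTa : ∀ a : ZMod p, ((F a)^(2*k))^(4*k) ≤ ∑ x, ρk x * F (a*x)^(4*k) := by
      intro a
      calc ((F a)^(2*k))^(4*k) ≤ (∑ x, ρk x * F (a*x))^(4*k) :=
            pow_le_pow_left₀ (by positivity) (hkey a) _
        _ ≤ ∑ x, ρk x * F (a*x)^(4*k) :=
            Real.pow_arith_mean_le_arith_mean_pow univ ρk (fun x => F (a*x))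
              (fun i _ => hρ0 i) hw1 (fun i _ => hFnonneg _) (4*k)
    set S : ℝ := ∑ x, ∑ a, ρk x * ‖f a‖ ^ (4 * k)
        * ‖f (a * x)‖ ^ (4 * k) with hS
    have hSF : S = ∑ a, F a^(4*k) * (∑ x, ρk x * F (a*x)^(4*k)) := by
      rw [hS, Finset.sum_comm]
      refine Finset.sum_congr rfl (fun a _ => ?_)
      rw [Finset.mul_sum]
      refine Finset.sum_congr rfl (fun x _ => ?_)
      rw [hff a, hff (a*x)]
      show ρk x * F a ^ (4*k) * F (a*x) ^ (4*k) = F a ^ (4*k) * (ρk x * F (a*x) ^ (4*k))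
      ring
    have hS1 : ∑ a, F a^(4*k) * ((F a)^(2*k))^(4*k) ≤ S := by
      rw [hSF]
      refine Finset.sum_le_sum (fun a _ => ?_)
      exact mul_le_mul_of_nonneg_left (hTa a) (by positivity)
    have hS2 : ((Lam ν').card : ℝ) * (p:ℝ)^(-(9*θ)) ≤ ∑ a, F a^(4*k) * ((F a)^(2*k))^(4*k) := by
      calc ((Lam ν').card : ℝ) * (p:ℝ)^(-(9*θ))
          = ∑ _a ∈ Lam ν', (p:ℝ)^(-(9*θ)) := by rw [Finset.sum_const, nsmul_eq_mul]
        _ ≤ ∑ a ∈ Lam ν', F a^(4*k) * ((F a)^(2*k))^(4*k) := by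
            refine Finset.sum_le_sum (fun a ha => ?_)
            have hmem : (p:ℝ)^(-ν') < F a := by
              simp only [hLam, Finset.mem_filter] at ha
              exact ha.2
            have hcomb : F a^(4*k) * ((F a)^(2*k))^(4*k) = F a^(4*k + 2*k*(4*k)) := by
              rw [← pow_mul, ← pow_add]
            rw [hcomb]
            calc (p:ℝ)^(-(9*θ)) ≤ (p:ℝ)^(-(((4*k + 2*k*(4*k) : ℕ) : ℝ) * ν')) := by
                  apply hrple
                  push_cast
                  nlinarith [h9θ]
              _ = ((p:ℝ)^(-ν'))^(4*k + 2*k*(4*k)) := (hrpow_pow ν' _).symm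
              _ ≤ F a^(4*k + 2*k*(4*k)) := pow_le_pow_left₀ (hrpos _).le hmem.le _
        _ ≤ ∑ a, F a^(4*k) * ((F a)^(2*k))^(4*k) :=
            Finset.sum_le_sum_of_subset_of_nonneg (Finset.subset_univ _)
              (fun a _ _ => by positivity)
    have hMN : M ≤ (p:ℝ)^θ * ((Lam ν').card : ℝ) := by
      calc M ≤ (p:ℝ)^(θ/2) * ((Lam ν).card : ℝ) := hM_le3
        _ ≤ (p:ℝ)^(θ/2) * ((p:ℝ)^(θ/2) * ((Lam ν').card : ℝ)) :=
            mul_le_mul_of_nonneg_left hratio (hrpos _).le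
        _ = ((p:ℝ)^(θ/2) * (p:ℝ)^(θ/2)) * ((Lam ν').card : ℝ) := by ring
        _ = (p:ℝ)^θ * ((Lam ν').card : ℝ) := by
            rw [hrpadd]
            norm_num
    rw [one_div, ← div_eq_inv_mul, le_div_iff₀ hMpos]
    calc (p:ℝ)^(-10*θ) * M ≤ (p:ℝ)^(-10*θ) * ((p:ℝ)^θ * ((Lam ν').card : ℝ)) :=
          mul_le_mul_of_nonneg_left hMN (hrpos _).le
      _ = ((p:ℝ)^(-10*θ) * (p:ℝ)^θ) * ((Lam ν').card : ℝ) := by ring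
      _ = (p:ℝ)^(-(9*θ)) * ((Lam ν').card : ℝ) := by
          rw [hrpadd, show (-10*θ + θ : ℝ) = -(9*θ) by ring]
      _ = ((Lam ν').card : ℝ) * (p:ℝ)^(-(9*θ)) := by ring
      _ ≤ ∑ a, F a^(4*k) * ((F a)^(2*k))^(4*k) := hS2
      _ ≤ S := hS1

open scoped Classical in
/-- For every `θ > 0` there are `ν₀ > 0` and `p₀` such that for all primes `p ≥ p₀` and
subgroups `H` of `𝔽_p^×`, there exist `ν₀ ≤ ν < θ/2` and `k ≥ 1` with (i)
`p^{-1-θ}|Λ_ν| ≤ M/p ≤ p^{-1+θ}|Λ_ν|` and (ii)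
`(1/M)·∑_{x,a} ρ_k(x)|f(a)|^{4k}|f(ax)|^{4k} ≥ p^{-10θ}`, where
`f(a) = (1/|H|)∑_{s∈H} e(as/p)`, `Λ_ν = {a : |f(a)| > p^{-ν}}`, `M = ∑_a |f(a)|^{4k}`
and `ρ_k` is the density of the alternating random walk of length `2k` on `H`. -/
theorem random_walk_peaking_estimates (θ : ℝ) (hθ : 0 < θ) :
    ∃ ν₀ : ℝ, 0 < ν₀ ∧ ∃ p₀ : ℕ,
      ∀ (p : ℕ) [Fact p.Prime], p₀ ≤ p →
        ∀ H : Subgroup (ZMod p)ˣ,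
          ∃ ν : ℝ, ν₀ ≤ ν ∧ ν < θ / 2 ∧ ∃ k : ℕ, 1 ≤ k ∧
            ∀ f : ZMod p → ℂ,
              (∀ a : ZMod p, f a = (1 / (Nat.card H : ℂ)) *
                  ∑ s : H, eChar p (a * ((s : (ZMod p)ˣ) : ZMod p))) →
              ∀ Λ : Set (ZMod p),
                Λ = {a : ZMod p | (p : ℝ) ^ (-ν) < ‖f a‖} →
              ∀ M : ℝ, M = ∑ a, ‖f a‖ ^ (4 * k) →
              ∀ ρk : ZMod p → ℝ,
                (∀ x : ZMod p, ρk x =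
                  (Nat.card {s : Fin (2 * k) → H //
                      ∑ i : Fin (2 * k), (-1 : ZMod p) ^ (i : ℕ) * ((s i : (ZMod p)ˣ) : ZMod p) = x} : ℝ) /
                    (Nat.card H : ℝ) ^ (2 * k)) →
                ((p : ℝ) ^ (-1 - θ) * Λ.ncard ≤ M / p ∧
                  M / p ≤ (p : ℝ) ^ (-1 + θ) * Λ.ncard) ∧
                (p : ℝ) ^ (-10 * θ) ≤
                  (1 / M) * ∑ x, ∑ a, ρk x *
                    ‖f a‖ ^ (4 * k) * ‖f (a * x)‖ ^ (4 * k) := by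
  have hθ'pos : 0 < min θ (1/100) := lt_min hθ (by norm_num)
  have hθ'le : min θ (1/100) ≤ 1/100 := min_le_right _ _
  have hθ'θ : min θ (1/100) ≤ θ := min_le_left _ _
  obtain ⟨ν₀, hν₀, p₀, hmain⟩ := main_small (min θ (1/100)) hθ'pos hθ'le
  refine ⟨ν₀, hν₀, p₀, ?_⟩
  intro p hfact hpge H
  obtain ⟨ν, hν1, hν2, k, hk, hrest⟩ := hmain p hpge H
  refine ⟨ν, hν1, lt_of_lt_of_le hν2 (by linarith), k, hk, ?_⟩
  intro f hf Λ hΛ M hM ρk hρ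
  obtain ⟨⟨hlow, hup⟩, hii⟩ := hrest f hf Λ hΛ M hM ρk hρ
  have hp1 : (1:ℝ) < p := by
    have h2 := hfact.out.two_le
    have : (2:ℝ) ≤ (p:ℝ) := by exact_mod_cast h2
    linarith
  have hrple : ∀ {y z : ℝ}, y ≤ z → (p:ℝ)^y ≤ (p:ℝ)^z :=
    fun h => Real.rpow_le_rpow_of_exponent_le hp1.le h
  have hΛ0 : (0:ℝ) ≤ (Λ.ncard : ℝ) := Nat.cast_nonneg _
  exact ⟨⟨le_trans (mul_le_mul_of_nonneg_right (hrple (by linarith)) hΛ0) hlow,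
          le_trans hup (mul_le_mul_of_nonneg_right (hrple (by linarith)) hΛ0)⟩,
         le_trans (hrple (by linarith : -10*θ ≤ -10*(min θ (1/100)))) hii⟩
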